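/- Let {X_n} be a ranking supermartingale with parameters K < 0, ε > 0 (i.e., X_n ≥ K a.s. and E(X_{n+1}|F_n) ≤ X_n − ε·1_{X_n ≥ 0}). Then the series ∑_{k=1}^∞ P(X_k ≥ 0) converges and its sum is at most (E(X_1) − K)/ε. -/

import Mathlib

open MeasureTheory
open scoped ENNReal

/-- For a ranking supermartingale, ∑_{k=1}^∞ P(X_k ≥ 0) converges and is at most
(E(X₁) − K)/ε. -/
theorem stmt2
    {Ω : Type*} {mΩ : MeasurableSpace Ω} {μ : Measure Ω} [IsProbabilityMeasure μ]
    (𝒢 : Filtration ℕ mΩ) (X : ℕ → Ω → ℝ)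
    (hadapt : Adapted 𝒢 X)
    (K ε : ℝ) (hK : K < 0) (hε : 0 < ε)
    (hint : ∀ n, Integrable (X n) μ)
    (hbd : ∀ n, 1 ≤ n → ∀ᵐ ω ∂μ, K ≤ X n ω)
    (hdec : ∀ n, 1 ≤ n → ∀ᵐ ω ∂μ,
      (μ[X (n + 1) | 𝒢 n]) ω ≤ X n ω - Set.indicator {ω' | 0 ≤ X n ω'} (fun _ => ε) ω) :
    Summable (fun k : ℕ => (μ {ω | 0 ≤ X (k + 1) ω}).toReal) ∧
      ∑' k : ℕ, (μ {ω | 0 ≤ X (k + 1) ω}).toReal ≤ (∫ ω, X 1 ω ∂μ - K) / ε := by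
  set p : ℕ → ℝ := fun n => (μ {ω | 0 ≤ X n ω}).toReal with hp
  have hs : ∀ n, MeasurableSet {ω | 0 ≤ X n ω} := fun n =>
    (𝒢.le n) _ (measurableSet_le measurable_const (hadapt n))
  have hind : ∀ n, Integrable (Set.indicator {ω' | 0 ≤ X n ω'} (fun _ => ε)) μ := fun n =>
    (integrable_const ε).indicator (hs n)
  -- key one-step inequality
  have key : ∀ n, 1 ≤ n → ∫ ω, X (n + 1) ω ∂μ ≤ ∫ ω, X n ω ∂μ - ε * p n := by
    intro n hn
    have h1 : ∫ ω, (μ[X (n + 1) | 𝒢 n]) ω ∂μ ≤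
        ∫ ω, (X n ω - Set.indicator {ω' | 0 ≤ X n ω'} (fun _ => ε) ω) ∂μ :=
      integral_mono_ae (integrable_condExp) ((hint n).sub (hind n)) (hdec n hn)
    rw [integral_condExp (𝒢.le n)] at h1
    rw [integral_sub (hint n) (hind n), integral_indicator_const (ε) (hs n)] at h1
    simpa [smul_eq_mul, mul_comm, measureReal_def] using h1
  have hpnonneg : ∀ n, 0 ≤ p n := fun n => ENNReal.toReal_nonneg
  -- partial sum bound
  have psum : ∀ N, ∫ ω, X (N + 1) ω ∂μ ≤ ∫ ω, X 1 ω ∂μ - ε * ∑ k ∈ Finset.range N, p (k + 1) := by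
    intro N
    induction N with
    | zero => simp
    | succ N ih =>
      have := key (N + 1) (by omega)
      rw [Finset.sum_range_succ]
      calc ∫ ω, X (N + 1 + 1) ω ∂μ ≤ ∫ ω, X (N + 1) ω ∂μ - ε * p (N + 1) := this
        _ ≤ (∫ ω, X 1 ω ∂μ - ε * ∑ k ∈ Finset.range N, p (k + 1)) - ε * p (N + 1) := by linarith
        _ = _ := by ring
  have hKle : ∀ N, K ≤ ∫ ω, X (N + 1) ω ∂μ := by
    intro N
    have := integral_mono_ae (integrable_const K) (hint (N + 1)) (hbd (N + 1) (by omega))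
    simpa using this
  have hbound : ∀ N, ∑ k ∈ Finset.range N, p (k + 1) ≤ (∫ ω, X 1 ω ∂μ - K) / ε := by
    intro N
    have h1 := psum N
    have h2 := hKle N
    rw [le_div_iff₀ hε]
    nlinarith [hε]
  have hsummable : Summable (fun k : ℕ => p (k + 1)) :=
    summable_of_sum_range_le (fun n => hpnonneg _) hbound
  refine ⟨hsummable, ?_⟩
  exact Summable.tsum_le_of_sum_range_le hsummable hbound
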